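/- Let A : X → ℝ be θ-Hölder for some θ ∈ (0,1] and let D ⊆ X be an open set containing Ω(A). Then the set D_A of θ-Hölder sub-actions u for A such that M_A(u) ⊆ D is open and dense in the set of all θ-Hölder sub-actions for A, with respect to the θ-Hölder topology. -/

import Mathlib

open MeasureTheory Filter Topology

section GLT

variable {X : Type*} [MetricSpace X]

/-- A transitive expanding dynamical system: a continuous, surjective, open,
several-to-one map whose inverse branches are uniformly contracting, and which
is topologically transitive. -/
structure IsExpandingTransitive (T : X → X) : Prop where
  cont : Continuous T
  surj : Function.Surjective T
  isOpenMap : IsOpenMap T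
  finite_preimages : ∀ x : X, {y : X | T y = x}.Finite
  transitive : ∀ U V : Set X, IsOpen U → IsOpen V → U.Nonempty → V.Nonempty →
    ∃ n : ℕ, ((T^[n]) ⁻¹' U ∩ V).Nonempty
  contracting : ∃ lam : ℝ, 0 < lam ∧ lam < 1 ∧ ∃ δ : ℝ, 0 < δ ∧
    ∀ x y : X, dist x y ≤ δ → dist x y ≤ lam * dist (T x) (T y)

/-- `Abar` is the ergodic minimizing value of `A`: the minimum (attained) of
`∫ A dμ` over all `T`-invariant Borel probability measures `μ`. -/
def IsErgMinValue [MeasurableSpace X] (T : X → X) (A : X → ℝ) (Abar : ℝ) : Prop :=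
  (∃ μ : Measure X, IsProbabilityMeasure μ ∧ MeasurePreserving T μ μ ∧ (∫ x, A x ∂μ) = Abar) ∧
  ∀ μ : Measure X, IsProbabilityMeasure μ → MeasurePreserving T μ μ → Abar ≤ ∫ x, A x ∂μ

/-- `f` is θ-Hölder. -/
def IsThetaHolder (θ : ℝ) (f : X → ℝ) : Prop :=
  ∃ C : ℝ, 0 ≤ C ∧ ∀ x y : X, |f x - f y| ≤ C * dist x y ^ θ

/-- `u` is a (continuous) sub-action for `A` with ergodic minimizing value `Abar`. -/
def IsSubaction (T : X → X) (A : X → ℝ) (Abar : ℝ) (u : X → ℝ) : Prop :=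
  Continuous u ∧ ∀ x : X, u (T x) - u x + Abar ≤ A x

/-- The contact locus of a sub-action `u`. -/
def contactLocus (T : X → X) (A : X → ℝ) (Abar : ℝ) (u : X → ℝ) : Set X :=
  {x : X | A x = u (T x) - u x + Abar}

/-- The set `Ω(A)` of non-wandering points with respect to `A`. -/
def nonwanderingSet (T : X → X) (A : X → ℝ) (Abar : ℝ) : Set X :=
  {x : X | ∀ ε : ℝ, 0 < ε → ∃ k : ℕ, 1 ≤ k ∧ ∃ y : X,
    dist x y < ε ∧ dist x (T^[k] y) < ε ∧
    |∑ j ∈ Finset.range k, (A (T^[j] y) - Abar)| < ε}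

/-- `u` is a calibrated sub-action: `u x = min_{T y = x} [u y + A y - Abar]`,
the minimum being attained. -/
def IsCalibrated (T : X → X) (A : X → ℝ) (Abar : ℝ) (u : X → ℝ) : Prop :=
  Continuous u ∧ ∀ x : X,
    (∀ y : X, T y = x → u x ≤ u y + A y - Abar) ∧
    (∃ y : X, T y = x ∧ u x = u y + A y - Abar)

/-- `S_A^ε(x, x', k)`: infimum of Birkhoff sums of `A - Abar` over orbit segments of
length `k` starting within `ε` of `x` and ending within `ε` of `x'`
(`sInf ∅ = ⊤` in `EReal`). -/
noncomputable def birkhoffInf (T : X → X) (A : X → ℝ) (Abar : ℝ) (ε : ℝ) (x x' : X)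
    (k : ℕ) : EReal :=
  sInf {v : EReal | ∃ z : X, dist z x < ε ∧ dist (T^[k] z) x' < ε ∧
    v = ((∑ j ∈ Finset.range k, (A (T^[j] z) - Abar) : ℝ) : EReal)}

/-- The Mañé potential `φ_A(x, x') = lim_{ε→0} inf_{k ≥ 1} S_A^ε(x, x', k)`;
since the quantity is nonincreasing in `ε`, the limit as `ε → 0` is the
supremum over `ε > 0`. -/
noncomputable def manePotential (T : X → X) (A : X → ℝ) (Abar : ℝ) (x x' : X) : EReal :=
  ⨆ ε : {e : ℝ // 0 < e}, ⨅ k : {n : ℕ // 1 ≤ n}, birkhoffInf T A Abar ε.1 x x' k.1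

/-- The Peierls barrier `h_A(x, x') = lim_{ε→0} liminf_{k→∞} S_A^ε(x, x', k)`;
since the quantity is nonincreasing in `ε`, the limit as `ε → 0` is the
supremum over `ε > 0`. -/
noncomputable def peierlsBarrier (T : X → X) (A : X → ℝ) (Abar : ℝ) (x x' : X) : EReal :=
  ⨆ ε : {e : ℝ // 0 < e},
    Filter.liminf (fun k : ℕ => birkhoffInf T A Abar ε.1 x x' k) Filter.atTop

/-- `C` is an irreducible component of `Ω(A)`: an equivalence class of the
relation `x ∼ x' ↔ h_A(x, x') + h_A(x', x) = 0` on `Ω(A)`. -/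
def IsIrredComponent (T : X → X) (A : X → ℝ) (Abar : ℝ) (C : Set X) : Prop :=
  ∃ x ∈ nonwanderingSet T A Abar, C = {y ∈ nonwanderingSet T A Abar |
    peierlsBarrier T A Abar x y + peierlsBarrier T A Abar y x = 0}

/-- The θ-Hölder norm `‖f‖_θ = sup |f| + sup_{x ≠ y} |f x - f y| / d(x,y)^θ`. -/
noncomputable def holderNorm (θ : ℝ) (f : X → ℝ) : ℝ :=
  (⨆ x : X, |f x|) +
    ⨆ p : {p : X × X // p.1 ≠ p.2}, |f p.1.1 - f p.1.2| / dist p.1.1 p.1.2 ^ θ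

end GLT

open Finset

section AUX
variable {X : Type*} [MetricSpace X]

theorem holder_cont {θ : ℝ} (hθ : 0 < θ) {f : X → ℝ} (hf : IsThetaHolder θ f) :
    Continuous f := by
  obtain ⟨C, hC, h⟩ := hf
  rw [Metric.continuous_iff]
  intro b ε hε
  refine ⟨(ε / (C + 1)) ^ θ⁻¹, Real.rpow_pos_of_pos (div_pos hε (by linarith)) _, fun a ha => ?_⟩
  have h1 : dist a b ^ θ ≤ ((ε / (C + 1)) ^ θ⁻¹) ^ θ :=
    Real.rpow_le_rpow dist_nonneg ha.le hθ.le
  rw [Real.rpow_inv_rpow (by positivity) hθ.ne'] at h1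
  rw [Real.dist_eq]
  calc |f a - f b| ≤ C * dist a b ^ θ := h a b
    _ ≤ C * (ε / (C+1)) := by nlinarith [Real.rpow_nonneg (dist_nonneg (x := a) (y := b)) θ]
    _ < ε := by rw [mul_div_assoc', div_lt_iff₀ (by linarith)]; nlinarith

theorem holder_bound [CompactSpace X] [Nonempty X] {f : X → ℝ} (hf : Continuous f) :
    ∃ B : ℝ, 0 ≤ B ∧ ∀ x, |f x| ≤ B := by
  obtain ⟨x₀, -, hx₀⟩ := isCompact_univ.exists_isMaxOn Set.univ_nonempty
    ((continuous_abs.comp hf).continuousOn)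
  exact ⟨|f x₀|, abs_nonneg _, fun x => hx₀ (Set.mem_univ x)⟩

theorem holder_sub {θ : ℝ} {f g : X → ℝ} (hf : IsThetaHolder θ f) (hg : IsThetaHolder θ g) :
    IsThetaHolder θ (fun x => f x - g x) := by
  obtain ⟨C, hC, h⟩ := hf; obtain ⟨C', hC', h'⟩ := hg
  refine ⟨C + C', by linarith, fun x y => ?_⟩
  have habs : |f x - g x - (f y - g y)| ≤ |f x - f y| + |g x - g y| := by
    rw [show f x - g x - (f y - g y) = (f x - f y) - (g x - g y) by ring]
    exact abs_sub _ _
  nlinarith [h x y, h' x y]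

theorem holderNorm_le {θ : ℝ} {f : X → ℝ} {B C : ℝ} (hB : 0 ≤ B) (hC : 0 ≤ C)
    (h1 : ∀ x, |f x| ≤ B) (h2 : ∀ x y : X, |f x - f y| ≤ C * dist x y ^ θ) :
    holderNorm θ f ≤ B + C := by
  have s1 : (⨆ x : X, |f x|) ≤ B := Real.iSup_le (fun x => h1 x) hB
  have s2 : (⨆ p : {p : X × X // p.1 ≠ p.2}, |f p.1.1 - f p.1.2| / dist p.1.1 p.1.2 ^ θ) ≤ C := by
    refine Real.iSup_le (fun p => ?_) hC
    have hd : 0 < dist p.1.1 p.1.2 ^ θ := Real.rpow_pos_of_pos (dist_pos.2 p.2) θ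
    rw [div_le_iff₀ hd]
    exact h2 _ _
  exact add_le_add s1 s2

theorem abs_le_holderNorm {θ : ℝ} {f : X → ℝ} {B : ℝ} (h1 : ∀ x, |f x| ≤ B) (x : X) :
    |f x| ≤ holderNorm θ f := by
  have s1 : |f x| ≤ ⨆ x : X, |f x| :=
    le_ciSup ⟨B, by rintro v ⟨y, rfl⟩; exact h1 y⟩ x
  have s2 : 0 ≤ ⨆ p : {p : X × X // p.1 ≠ p.2}, |f p.1.1 - f p.1.2| / dist p.1.1 p.1.2 ^ θ :=
    Real.iSup_nonneg (fun p => div_nonneg (abs_nonneg _) (Real.rpow_nonneg dist_nonneg _))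
  unfold holderNorm; linarith

theorem geomsum_le (q : ℝ) (hq : 0 ≤ q) (hq1 : q < 1) (k : ℕ) :
    ∑ j ∈ range k, q ^ j ≤ (1-q)⁻¹ := by
  have h2 : (0:ℝ) < 1 - q := by linarith
  have hk : 0 ≤ q ^ k := pow_nonneg hq k
  have e : (q ^ k - 1) / (q - 1) = (1 - q ^ k) / (1 - q) := by
    rw [div_eq_div_iff (by linarith) h2.ne']; ring
  rw [geom_sum_eq hq1.ne k, e, div_le_iff₀ h2, inv_mul_cancel₀ h2.ne']
  linarith

theorem geomsum_rev_le (q : ℝ) (hq : 0 ≤ q) (hq1 : q < 1) (k : ℕ) :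
    ∑ j ∈ range k, q ^ (k - j) ≤ (1-q)⁻¹ := by
  have e : ∑ j ∈ range k, q^(k-j) = ∑ j ∈ range k, q^(j+1) := by
    rw [← Finset.sum_range_reflect]
    apply Finset.sum_congr rfl; intro j hj; simp only [Finset.mem_range] at hj; congr 1; omega
  rw [e]
  calc ∑ j ∈ range k, q^(j+1) ≤ ∑ j ∈ range k, q^j :=
        Finset.sum_le_sum (fun j _ => pow_le_pow_of_le_one hq hq1.le (by omega))
    _ ≤ (1-q)⁻¹ := geomsum_le q hq hq1 k

theorem min_lip (a b c : ℝ) : |min c a - min c b| ≤ |a - b| := by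
  rcases le_total a c with h1 | h1 <;> rcases le_total b c with h2 | h2
  · rw [min_eq_right h1, min_eq_right h2]
  · rw [min_eq_right h1, min_eq_left h2]
    rcases abs_cases (a - b) with ⟨e, he⟩ | ⟨e, he⟩ <;> rw [abs_le] <;> constructor <;> linarith
  · rw [min_eq_left h1, min_eq_right h2]
    rcases abs_cases (a - b) with ⟨e, he⟩ | ⟨e, he⟩ <;> rw [abs_le] <;> constructor <;> linarith
  · rw [min_eq_left h1, min_eq_left h2]; simp [abs_nonneg]

theorem lift_lemma [CompactSpace X] [Nonempty X] {T : X → X} (hc : Continuous T) (ho : IsOpenMap T)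
    {lam δ : ℝ} (hδ : 0 < δ)
    (hcontr : ∀ x y : X, dist x y ≤ δ → dist x y ≤ lam * dist (T x) (T y)) :
    ∃ ρ : ℝ, 0 < ρ ∧ ∀ b a' : X, dist (T b) a' < ρ →
      ∃ b', T b' = a' ∧ dist b b' ≤ lam * dist (T b) a' := by
  have key : ∀ b : X, ∃ ρb > 0, Metric.ball (T b) (2 * ρb) ⊆ T '' Metric.ball b (δ/4) := by
    intro b
    have hob : IsOpen (T '' Metric.ball b (δ/4)) := ho _ Metric.isOpen_ball
    have hmem : T b ∈ T '' Metric.ball b (δ/4) :=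
      ⟨b, Metric.mem_ball_self (by linarith), rfl⟩
    obtain ⟨r, hr, hball⟩ := Metric.isOpen_iff.1 hob _ hmem
    exact ⟨r / 2, by linarith, by rw [show 2 * (r/2) = r by ring]; exact hball⟩
  choose ρb hρb hρball using key
  have keyc : ∀ b : X, ∃ ηb > 0, ηb < δ/4 ∧ ∀ y, dist y b < ηb → dist (T y) (T b) < ρb b := by
    intro b
    obtain ⟨η, hη, hη2⟩ := Metric.continuous_iff.1 hc b (ρb b) (hρb b)
    exact ⟨min η (δ/8), lt_min hη (by linarith), lt_of_le_of_lt (min_le_right _ _) (by linarith),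
      fun y hy => hη2 y (lt_of_lt_of_le hy (min_le_left _ _))⟩
  choose ηb hηb hηb2 hηb3 using keyc
  obtain ⟨s, hs⟩ := isCompact_univ.elim_finite_subcover (fun b => Metric.ball b (ηb b))
    (fun b => Metric.isOpen_ball) (fun x _ => Set.mem_iUnion.2 ⟨x, Metric.mem_ball_self (hηb x)⟩)
  have hsne : s.Nonempty := by
    rcases Set.univ_nonempty (α := X) with ⟨x, -⟩
    have := hs (Set.mem_univ x)
    simp only [Set.mem_iUnion] at this
    obtain ⟨i, hi, -⟩ := this
    exact ⟨i, hi⟩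
  refine ⟨s.inf' hsne ρb, by rw [Finset.lt_inf'_iff]; exact fun i _ => hρb i, fun b a' hba => ?_⟩
  have := hs (Set.mem_univ b)
  simp only [Set.mem_iUnion] at this
  obtain ⟨i, hi, hbi⟩ := this
  have hbi' : dist b i < ηb i := Metric.mem_ball.1 hbi
  have hTbi : dist (T b) (T i) < ρb i := hηb3 i b hbi'
  have hρi : s.inf' hsne ρb ≤ ρb i := Finset.inf'_le _ hi
  have ha'i : dist a' (T i) < 2 * ρb i := by
    calc dist a' (T i) ≤ dist a' (T b) + dist (T b) (T i) := dist_triangle _ _ _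
      _ < s.inf' hsne ρb + ρb i := add_lt_add (by rwa [dist_comm]) hTbi
      _ ≤ 2 * ρb i := by linarith
  obtain ⟨b', hb'mem, hb'⟩ := hρball i (Metric.mem_ball.2 ha'i)
  have hb'i : dist b' i < δ/4 := Metric.mem_ball.1 hb'mem
  have hbb' : dist b b' ≤ δ := by
    calc dist b b' ≤ dist b i + dist i b' := dist_triangle _ _ _
      _ ≤ δ/4 + δ/4 := by
          rw [dist_comm i b']
          exact add_le_add (le_of_lt (lt_of_lt_of_le hbi' (hηb2 i).le)) hb'i.le
      _ ≤ δ := by linarith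
  refine ⟨b', hb', ?_⟩
  have := hcontr b b' hbb'
  rwa [hb'] at this

theorem iter_lift {T : X → X} {lam ρ : ℝ} (hlam0 : 0 ≤ lam) (hlam1 : lam ≤ 1) (hρ : 0 < ρ)
    (hlift : ∀ b a' : X, dist (T b) a' < ρ →
      ∃ b', T b' = a' ∧ dist b b' ≤ lam * dist (T b) a') :
    ∀ (k : ℕ) (z x' : X), dist (T^[k] z) x' < ρ →
      ∃ z', T^[k] z' = x' ∧ ∀ j, j ≤ k →
        dist (T^[j] z) (T^[j] z') ≤ lam ^ (k - j) * dist (T^[k] z) x' := by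
  intro k
  induction k with
  | zero => exact fun z x' h => ⟨x', rfl, fun j hj => by simp_all⟩
  | succ k ih =>
    intro z x' h
    have hTk : T (T^[k] z) = T^[k+1] z := (Function.iterate_succ_apply' T k z).symm
    obtain ⟨y, hy, hdy⟩ := hlift (T^[k] z) x' (by rwa [hTk])
    rw [hTk] at hdy
    set d := dist (T^[k+1] z) x' with hd
    have hd0 : 0 ≤ d := dist_nonneg
    have hlamd : lam * d < ρ := lt_of_le_of_lt (by nlinarith) h
    obtain ⟨z', hz', hz'j⟩ := ih z y (lt_of_le_of_lt hdy hlamd)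
    refine ⟨z', by rw [Function.iterate_succ_apply', hz', hy], fun j hj => ?_⟩
    rcases Nat.lt_or_ge j (k+1) with hjk | hjk
    · have hjk' : j ≤ k := Nat.lt_succ_iff.1 hjk
      calc dist (T^[j] z) (T^[j] z') ≤ lam ^ (k - j) * dist (T^[k] z) y := hz'j j hjk'
        _ ≤ lam ^ (k - j) * (lam * d) := by
            have := pow_nonneg hlam0 (k - j)
            nlinarith
        _ = lam ^ (k + 1 - j) * d := by
            rw [show k + 1 - j = (k - j) + 1 by omega, pow_succ]; ring
    · have hj' : j = k + 1 := le_antisymm hj hjk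
      subst hj'
      rw [Nat.sub_self, pow_zero, one_mul, Function.iterate_succ_apply' T k z', hz', hy]

end AUX

section STRICT
variable {X : Type*} [MetricSpace X] [CompactSpace X] [Nonempty X]

set_option maxHeartbeats 1000000 in
theorem strict_subaction {T : X → X} (hT : IsExpandingTransitive T)
    {θ : ℝ} (hθ0 : 0 < θ) (hθ1 : θ ≤ 1)
    {A : X → ℝ} (hA : IsThetaHolder θ A) (Abar : ℝ)
    {u₀ : X → ℝ} (hu₀h : IsThetaHolder θ u₀) (hu₀ : IsSubaction T A Abar u₀)
    {x₀ : X} (hx₀ : x₀ ∉ nonwanderingSet T A Abar) :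
    ∃ w : X → ℝ, IsThetaHolder θ w ∧ IsSubaction T A Abar w ∧
      w (T x₀) - w x₀ + Abar < A x₀ := by
  obtain ⟨C₀, hC₀, hu₀C⟩ := hu₀h
  obtain ⟨CA, hCA, hAC⟩ := hA
  obtain ⟨lam, hlam0, hlam1, δ, hδ, hcontr⟩ := hT.contracting
  obtain ⟨ρ₀, hρ₀, hlift⟩ := lift_lemma hT.cont hT.isOpenMap hδ hcontr
  simp only [nonwanderingSet, Set.mem_setOf_eq] at hx₀
  push_neg at hx₀
  obtain ⟨ε₀, hε₀, hP⟩ := hx₀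
  -- gap function
  set g0 : X → ℝ := fun x => A x - Abar - (u₀ (T x) - u₀ x) with hg0
  have hg0nn : ∀ x, 0 ≤ g0 x := fun x => by
    have := hu₀.2 x; simp only [hg0]; linarith
  have hg0cont : Continuous g0 :=
    ((holder_cont hθ0 ⟨CA, hCA, hAC⟩).sub continuous_const).sub
      ((hu₀.1.comp hT.cont).sub hu₀.1)
  obtain ⟨G, hG0, hGb⟩ := holder_bound hg0cont
  -- radii and constants
  set r₁ : ℝ := min (ε₀/2) ((ε₀/(2*C₀+2)) ^ θ⁻¹) with hr₁def
  have hr₁pos : 0 < r₁ := lt_min (by linarith) (Real.rpow_pos_of_pos (by positivity) _)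
  have hr₁a : r₁ < ε₀ := lt_of_le_of_lt (min_le_left _ _) (by linarith)
  have hr₁b : C₀ * r₁ ^ θ ≤ ε₀ / 2 := by
    have h1 : r₁ ^ θ ≤ ((ε₀/(2*C₀+2)) ^ θ⁻¹) ^ θ :=
      Real.rpow_le_rpow hr₁pos.le (min_le_right _ _) hθ0.le
    rw [Real.rpow_inv_rpow (by positivity) hθ0.ne'] at h1
    have h2 : C₀ * r₁ ^ θ ≤ C₀ * (ε₀/(2*C₀+2)) := by nlinarith [Real.rpow_nonneg hr₁pos.le θ]
    have h3 : C₀ * (ε₀/(2*C₀+2)) ≤ ε₀/2 := by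
      rw [mul_div_assoc', div_le_div_iff₀ (by linarith) (by norm_num)]
      nlinarith
    linarith
  set c : ℝ := ε₀ / 2 with hcdef
  have hc : 0 < c := by positivity
  set β : ℝ := 2 * c / r₁ with hβdef
  have hβ : 0 < β := by positivity
  set Φ : ℝ → ℝ := fun t => min c (max (β * (t - r₁/2)) 0) with hΦdef
  have hΦnn : ∀ t, 0 ≤ Φ t := fun t => le_min hc.le (le_max_right _ _)
  have hΦc : ∀ t, Φ t ≤ c := fun t => min_le_left _ _
  have hΦ0 : Φ 0 = 0 := by
    simp only [hΦdef]
    rw [max_eq_right (by nlinarith), min_eq_right hc.le]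
  have hΦfar : ∀ t, r₁ ≤ t → Φ t = c := by
    intro t ht
    have : c ≤ β * (t - r₁/2) := by
      rw [hβdef]; rw [div_mul_eq_mul_div, le_div_iff₀ hr₁pos]; nlinarith
    simp only [hΦdef]
    rw [max_eq_left (by linarith), min_eq_left this]
  have hΦlip : ∀ s t, |Φ s - Φ t| ≤ β * |s - t| := by
    intro s t
    calc |Φ s - Φ t| ≤ |max (β * (s - r₁/2)) 0 - max (β * (t - r₁/2)) 0| := min_lip _ _ c
      _ ≤ |β * (s - r₁/2) - β * (t - r₁/2)| := abs_max_sub_max_le_abs _ _ _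
      _ = β * |s - t| := by rw [show β * (s - r₁/2) - β * (t - r₁/2) = β * (s - t) by ring,
          abs_mul, abs_of_pos hβ]
  -- the infimum function H
  set S : X → Set ℝ := fun x => {v | ∃ k, 1 ≤ k ∧ ∃ z, T^[k] z = x ∧
    v = (∑ j ∈ range k, g0 (T^[j] z)) + Φ (dist z x₀)} with hSdef
  have hSne : ∀ x, (S x).Nonempty := by
    intro x
    obtain ⟨z, hz⟩ := hT.surj x
    exact ⟨_, 1, le_refl 1, z, by simpa using hz, rfl⟩
  have hSnn : ∀ x, ∀ v ∈ S x, 0 ≤ v := by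
    rintro x v ⟨k, hk, z, hz, rfl⟩
    exact add_nonneg (Finset.sum_nonneg fun j _ => hg0nn _) (hΦnn _)
  have hSbdd : ∀ x, BddBelow (S x) := fun x => ⟨0, fun v hv => hSnn x v hv⟩
  set H : X → ℝ := fun x => sInf (S x) with hHdef
  have hH0 : ∀ x, 0 ≤ H x := fun x => le_csInf (hSne x) (hSnn x)
  -- telescoping identity
  have htel : ∀ (k : ℕ) (z : X), (∑ j ∈ range k, g0 (T^[j] z)) =
      (∑ j ∈ range k, (A (T^[j] z) - Abar)) - (u₀ (T^[k] z) - u₀ z) := by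
    intro k z
    have : ∀ j, g0 (T^[j] z) = (A (T^[j] z) - Abar) -
        (u₀ (T^[j+1] z) - u₀ (T^[j] z)) := by
      intro j
      simp only [hg0, Function.iterate_succ_apply' T j z]
    simp only [this]
    rw [Finset.sum_sub_distrib, Finset.sum_range_sub (fun j => u₀ (T^[j] z))]
    simp
  -- F1
  have hF1 : ∀ x, H (T x) ≤ H x + g0 x := by
    intro x
    rw [show H x + g0 x = sInf (S x) + g0 x from rfl]
    have : H (T x) - g0 x ≤ sInf (S x) := by
      refine le_csInf (hSne x) (fun v hv => ?_)
      obtain ⟨k, hk, z, hz, rfl⟩ := hv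
      have hmem : ((∑ j ∈ range k, g0 (T^[j] z)) + Φ (dist z x₀)) + g0 x ∈ S (T x) := by
        refine ⟨k+1, by omega, z, ?_, ?_⟩
        · rw [Function.iterate_succ_apply', hz]
        · rw [Finset.sum_range_succ, hz]; ring
      linarith [csInf_le (hSbdd (T x)) hmem]
    linarith
  -- F2
  have hF2 : H (T x₀) ≤ g0 x₀ := by
    have hmem : g0 x₀ ∈ S (T x₀) := by
      refine ⟨1, le_refl 1, x₀, by simp, ?_⟩
      simp [hΦ0]
    exact csInf_le (hSbdd _) hmem
  -- F3
  have hF3 : c ≤ H x₀ := by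
    refine le_csInf (hSne x₀) (fun v hv => ?_)
    obtain ⟨k, hk, z, hz, rfl⟩ := hv
    rcases le_or_gt r₁ (dist z x₀) with hfar | hnear
    · rw [hΦfar _ hfar]
      have := Finset.sum_nonneg (fun j (_ : j ∈ range k) => hg0nn (T^[j] z))
      linarith
    · -- near case: Birkhoff sum is at least ε₀
      have hdzb : dist z x₀ ^ θ ≤ r₁ ^ θ := Real.rpow_le_rpow dist_nonneg hnear.le hθ0.le
      have huz : |u₀ z - u₀ x₀| ≤ ε₀/2 := by
        calc |u₀ z - u₀ x₀| ≤ C₀ * dist z x₀ ^ θ := hu₀C z x₀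
          _ ≤ C₀ * r₁ ^ θ := by nlinarith [Real.rpow_nonneg (dist_nonneg (x := z) (y := x₀)) θ]
          _ ≤ ε₀/2 := hr₁b
      set sumA := ∑ j ∈ range k, (A (T^[j] z) - Abar) with hsumA
      have hts := htel k z
      rw [hz] at hts
      have hsumAlb : -(ε₀/2) ≤ sumA := by
        have h1 : 0 ≤ ∑ j ∈ range k, g0 (T^[j] z) :=
          Finset.sum_nonneg (fun j _ => hg0nn _)
        have h2 : u₀ z - u₀ x₀ ≤ ε₀/2 := le_of_abs_le huz |>.trans (le_refl _) |>.trans (le_refl _)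
        have h3 : -(ε₀/2) ≤ u₀ z - u₀ x₀ := neg_le_of_abs_le huz
        linarith
      have hPk : ε₀ ≤ |sumA| := by
        refine hP k hk z ?_ ?_
        · rw [dist_comm]; linarith
        · rw [hz, dist_self]; exact hε₀
      have hsumAge : ε₀ ≤ sumA := by
        rcases le_abs.1 hPk with h | h
        · exact h
        · linarith
      have h4 : -(ε₀/2) ≤ u₀ z - u₀ x₀ := neg_le_of_abs_le huz
      have : c ≤ ∑ j ∈ range k, g0 (T^[j] z) := by
        rw [hts]; simp only [hcdef]; linarith
      linarith [hΦnn (dist z x₀)]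
  -- F5 : upper bound
  have hHub : ∀ x, H x ≤ G + c := by
    intro x
    obtain ⟨z, hz⟩ := hT.surj x
    have hmem : g0 z + Φ (dist z x₀) ∈ S x := ⟨1, le_refl 1, z, by simpa using hz, by simp⟩
    have := csInf_le (hSbdd x) hmem
    have h1 := le_of_abs_le (hGb z)
    have h2 := hΦc (dist z x₀)
    linarith
  -- F4 : local Holder estimate
  set q : ℝ := lam ^ θ with hqdef
  have hq0 : 0 ≤ q := Real.rpow_nonneg hlam0.le θ
  have hq1 : q < 1 := Real.rpow_lt_one hlam0.le hlam1 hθ0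
  set ρ₁ : ℝ := min ρ₀ 1 with hρ₁def
  have hρ₁ : 0 < ρ₁ := lt_min hρ₀ one_pos
  set C₂ : ℝ := CA * (1-q)⁻¹ + 2*C₀ + β with hC₂def
  have hC₂0 : 0 ≤ C₂ := by
    have h1 : 0 ≤ (1-q)⁻¹ := inv_nonneg.2 (by linarith)
    have h2 : 0 ≤ CA * (1-q)⁻¹ := mul_nonneg hCA h1
    simp only [hC₂def]; linarith
  have hpowrpow : ∀ n : ℕ, (lam ^ n : ℝ) ^ θ = q ^ n := by
    intro n
    rw [hqdef, ← Real.rpow_natCast lam n, ← Real.rpow_natCast (lam ^ θ) n,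
      ← Real.rpow_mul hlam0.le, ← Real.rpow_mul hlam0.le, mul_comm]
  have hF4 : ∀ x x', dist x x' < ρ₁ → H x' ≤ H x + C₂ * dist x x' ^ θ := by
    intro x x' hdxx
    rcases eq_or_lt_of_le (dist_nonneg (x := x) (y := x')) with hd0 | hd0
    · have hxx : x = x' := eq_of_dist_eq_zero hd0.symm
      subst hxx
      have : 0 ≤ C₂ * dist x x ^ θ := by positivity
      linarith
    set d : ℝ := dist x x' with hddef
    have hd1 : d < 1 := lt_of_lt_of_le hdxx (min_le_right _ _)
    have hdρ₀ : d < ρ₀ := lt_of_lt_of_le hdxx (min_le_left _ _)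
    have hdθ0 : 0 < d ^ θ := Real.rpow_pos_of_pos hd0 θ
    have hddθ : d ≤ d ^ θ := by
      nth_rewrite 1 [← Real.rpow_one d]
      exact Real.rpow_le_rpow_of_exponent_ge hd0 hd1.le hθ1
    have key : H x' - C₂ * d ^ θ ≤ sInf (S x) := by
      refine le_csInf (hSne x) (fun v hv => ?_)
      obtain ⟨k, hk, z, hz, rfl⟩ := hv
      have hdz : dist (T^[k] z) x' < ρ₀ := by rw [hz]; exact hdρ₀
      obtain ⟨z', hz', hz'j⟩ := iter_lift hlam0.le hlam1.le hρ₀ hlift k z x' hdz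
      have hz'jd : ∀ j, j ≤ k → dist (T^[j] z) (T^[j] z') ≤ lam ^ (k-j) * d := by
        intro j hj; have := hz'j j hj; rwa [hz] at this
      -- bound on sum of A differences
      have hsumAd : |(∑ j ∈ range k, (A (T^[j] z') - Abar)) -
          (∑ j ∈ range k, (A (T^[j] z) - Abar))| ≤ CA * (1-q)⁻¹ * d ^ θ := by
        rw [← Finset.sum_sub_distrib]
        calc |∑ j ∈ range k, ((A (T^[j] z') - Abar) - (A (T^[j] z) - Abar))|
            ≤ ∑ j ∈ range k, |(A (T^[j] z') - Abar) - (A (T^[j] z) - Abar)| :=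
              Finset.abs_sum_le_sum_abs _ _
          _ ≤ ∑ j ∈ range k, CA * (q ^ (k-j) * d ^ θ) := by
              refine Finset.sum_le_sum (fun j hj => ?_)
              have hjk : j ≤ k := (Finset.mem_range.1 hj).le
              have h1 : |A (T^[j] z') - A (T^[j] z)| ≤ CA * dist (T^[j] z') (T^[j] z) ^ θ :=
                hAC _ _
              have h2 : dist (T^[j] z') (T^[j] z) ^ θ ≤ (lam ^ (k-j) * d) ^ θ := by
                rw [dist_comm]
                exact Real.rpow_le_rpow dist_nonneg (hz'jd j hjk) hθ0.le
              have h3 : ((lam ^ (k-j) * d) : ℝ) ^ θ = q ^ (k-j) * d ^ θ := by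
                rw [Real.mul_rpow (pow_nonneg hlam0.le _) hd0.le, hpowrpow]
              rw [show (A (T^[j] z') - Abar) - (A (T^[j] z) - Abar)
                = A (T^[j] z') - A (T^[j] z) by ring]
              calc |A (T^[j] z') - A (T^[j] z)| ≤ CA * dist (T^[j] z') (T^[j] z) ^ θ := h1
                _ ≤ CA * (q ^ (k-j) * d ^ θ) := by
                    rw [← h3]
                    nlinarith [Real.rpow_nonneg (dist_nonneg (x := T^[j] z') (y := T^[j] z)) θ]
          _ = CA * d ^ θ * ∑ j ∈ range k, q ^ (k-j) := by
              rw [Finset.mul_sum]; apply Finset.sum_congr rfl; intros; ring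
          _ ≤ CA * (1-q)⁻¹ * d ^ θ := by
              have hg := geomsum_rev_le q hq0 hq1 k
              have : 0 ≤ CA * d ^ θ := by positivity
              nlinarith [Finset.sum_nonneg (fun j (_ : j ∈ range k) => pow_nonneg hq0 (k-j))]
      -- bounds on u₀ differences
      have hzz' : dist z z' ≤ d := by
        have := hz'jd 0 (Nat.zero_le k)
        simp only [Function.iterate_zero_apply] at this
        have hlk : lam ^ (k - 0) ≤ 1 := pow_le_one₀ hlam0.le hlam1.le
        nlinarith
      have hu1 : |u₀ x - u₀ x'| ≤ C₀ * d ^ θ := hu₀C x x'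
      have hu2 : |u₀ z' - u₀ z| ≤ C₀ * d ^ θ := by
        calc |u₀ z' - u₀ z| ≤ C₀ * dist z' z ^ θ := hu₀C z' z
          _ ≤ C₀ * d ^ θ := by
              have : dist z' z ^ θ ≤ d ^ θ :=
                Real.rpow_le_rpow dist_nonneg (by rwa [dist_comm]) hθ0.le
              nlinarith [Real.rpow_nonneg (dist_nonneg (x := z') (y := z)) θ]
      -- penalty bound
      have hΦd : |Φ (dist z' x₀) - Φ (dist z x₀)| ≤ β * d ^ θ := by
        calc |Φ (dist z' x₀) - Φ (dist z x₀)| ≤ β * |dist z' x₀ - dist z x₀| := hΦlip _ _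
          _ ≤ β * dist z' z := by
              have := abs_dist_sub_le z' z x₀
              nlinarith
          _ ≤ β * d ^ θ := by
              have h1 : dist z' z ≤ d := by rwa [dist_comm]
              nlinarith
      -- assemble
      have hmem' : ((∑ j ∈ range k, g0 (T^[j] z')) + Φ (dist z' x₀)) ∈ S x' :=
        ⟨k, hk, z', hz', rfl⟩
      have hHx' := csInf_le (hSbdd x') hmem'
      have ht1 := htel k z
      have ht2 := htel k z'
      rw [hz] at ht1
      rw [hz'] at ht2
      -- (sum g0 z') ≤ (sum g0 z) + C₂ d^θ
      have hcomp : (∑ j ∈ range k, g0 (T^[j] z')) + Φ (dist z' x₀) ≤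
          (∑ j ∈ range k, g0 (T^[j] z)) + Φ (dist z x₀) + C₂ * d ^ θ := by
        rw [ht1, ht2, hC₂def]
        have e1 := abs_le.1 hsumAd
        have e2 := abs_le.1 hu1
        have e3 := abs_le.1 hu2
        have e4 := abs_le.1 hΦd
        linarith [e1.2, e2.1, e2.2, e3.1, e3.2, e4.1, e4.2, e1.1]
      linarith
    linarith [key]
  -- global Holder for h := min (H ·) c
  set h : X → ℝ := fun x => min (H x) c with hhdef
  have hhx : ∀ x, h x = min (H x) c := fun x => rfl
  have hρ₁θ : 0 < ρ₁ ^ θ := Real.rpow_pos_of_pos hρ₁ θ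
  set C₃ : ℝ := C₂ + c * (ρ₁ ^ θ)⁻¹ with hC₃def
  have hC₃0 : 0 ≤ C₃ := by
    have h6 : 0 ≤ c * (ρ₁ ^ θ)⁻¹ := by positivity
    simp only [hC₃def]; linarith
  have hC₂₃ : C₂ ≤ C₃ := by
    have h6 : 0 ≤ c * (ρ₁ ^ θ)⁻¹ := by positivity
    simp only [hC₃def]; linarith
  have hhH : ∀ x x', |h x - h x'| ≤ C₃ * dist x x' ^ θ := by
    have hbound : ∀ y y' : X, dist y y' < ρ₁ → h y' ≤ h y + C₂ * dist y y' ^ θ := by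
      intro y y' hd
      have h7 := hF4 y y' hd
      have h8 : 0 ≤ C₂ * dist y y' ^ θ :=
        mul_nonneg hC₂0 (Real.rpow_nonneg dist_nonneg θ)
      calc h y' ≤ min (H y + C₂ * dist y y' ^ θ) c := min_le_min h7 (le_refl c)
        _ ≤ min (H y + C₂ * dist y y' ^ θ) (c + C₂ * dist y y' ^ θ) :=
            min_le_min (le_refl _) (by linarith)
        _ = h y + C₂ * dist y y' ^ θ := min_add_add_right _ _ _
    intro x x'
    have hdθ : 0 ≤ dist x x' ^ θ := Real.rpow_nonneg dist_nonneg θ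
    rcases lt_or_ge (dist x x') ρ₁ with hlt | hge
    · have h1 := hbound x x' hlt
      have h2 := hbound x' x (by rwa [dist_comm])
      rw [dist_comm x' x] at h2
      have h9 : C₂ * dist x x' ^ θ ≤ C₃ * dist x x' ^ θ := by nlinarith
      rw [abs_le]; constructor <;> linarith
    · have hx0 : 0 ≤ h x := le_min (hH0 x) hc.le
      have hx0' : 0 ≤ h x' := le_min (hH0 x') hc.le
      have hxc : h x ≤ c := min_le_right _ _
      have hxc' : h x' ≤ c := min_le_right _ _
      have hdd : ρ₁ ^ θ ≤ dist x x' ^ θ := Real.rpow_le_rpow hρ₁.le hge hθ0.le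
      have h10 : c ≤ C₃ * dist x x' ^ θ := by
        have e : c = (c * (ρ₁ ^ θ)⁻¹) * ρ₁ ^ θ := by
          field_simp
        rw [e]
        have h11 : 0 ≤ c * (ρ₁ ^ θ)⁻¹ := by positivity
        have h12 : (c * (ρ₁ ^ θ)⁻¹) * ρ₁ ^ θ ≤ (c * (ρ₁ ^ θ)⁻¹) * dist x x' ^ θ := by nlinarith
        calc (c * (ρ₁ ^ θ)⁻¹) * ρ₁ ^ θ ≤ (c * (ρ₁ ^ θ)⁻¹) * dist x x' ^ θ := h12
          _ ≤ C₃ * dist x x' ^ θ := by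
              have h13 : c * (ρ₁ ^ θ)⁻¹ ≤ C₃ := by simp only [hC₃def]; linarith
              nlinarith
      rw [abs_le]; constructor <;> linarith
  -- conclusion
  have hgx : ∀ x, g0 x = A x - Abar - (u₀ (T x) - u₀ x) := fun x => rfl
  clear_value h C₃ H S C₂ Φ β q ρ₁ c r₁ g0
  refine ⟨fun x => u₀ x + h x, ⟨C₀ + C₃, by linarith, fun x y => ?_⟩, ⟨?_, ?_⟩, ?_⟩
  · have h1 := hu₀C x y
    have h2 := hhH x y
    calc |u₀ x + h x - (u₀ y + h y)| = |(u₀ x - u₀ y) + (h x - h y)| := by ring_nf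
      _ ≤ |u₀ x - u₀ y| + |h x - h y| := abs_add_le _ _
      _ ≤ (C₀ + C₃) * dist x y ^ θ := by linarith [add_mul C₀ C₃ (dist x y ^ θ)]
  · exact hu₀.1.add (holder_cont hθ0 ⟨C₃, hC₃0, hhH⟩)
  · intro x
    have hmin : h (T x) ≤ h x + g0 x := by
      rw [hhx (T x), hhx x]
      calc min (H (T x)) c ≤ min (H x + g0 x) c := min_le_min (hF1 x) (le_refl c)
        _ ≤ min (H x + g0 x) (c + g0 x) := min_le_min (le_refl _) (by linarith [hg0nn x])
        _ = min (H x) c + g0 x := min_add_add_right _ _ _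
    have hg := hgx x
    show u₀ (T x) + h (T x) - (u₀ x + h x) + Abar ≤ A x
    linarith
  · have hhx₀ : h x₀ = c := by rw [hhx x₀]; exact min_eq_right hF3
    have hhTx₀ : h (T x₀) ≤ min (g0 x₀) c := by rw [hhx (T x₀)]; exact min_le_min hF2 (le_refl c)
    have h5 : min (g0 x₀) c ≤ g0 x₀ := min_le_left _ _
    have hg := hgx x₀
    show u₀ (T x₀) + h (T x₀) - (u₀ x₀ + h x₀) + Abar < A x₀
    linarith



end STRICT

section SEP
variable {X : Type*} [MetricSpace X] [CompactSpace X] [Nonempty X]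

theorem separating_subaction {T : X → X} (hT : IsExpandingTransitive T)
    {θ : ℝ} (hθ0 : 0 < θ) (hθ1 : θ ≤ 1)
    {A : X → ℝ} (hA : IsThetaHolder θ A) (Abar : ℝ)
    {u₀ : X → ℝ} (hu₀h : IsThetaHolder θ u₀) (hu₀ : IsSubaction T A Abar u₀)
    {D : Set X} (hD : IsOpen D) (hΩD : nonwanderingSet T A Abar ⊆ D) :
    ∃ w : X → ℝ, IsThetaHolder θ w ∧ IsSubaction T A Abar w ∧
      ∀ x, x ∉ D → w (T x) - w x + Abar < A x := by
  by_cases hK : (Dᶜ : Set X) = ∅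
  · refine ⟨u₀, hu₀h, hu₀, fun x hx => ?_⟩
    exfalso
    have hmem : x ∈ (Dᶜ : Set X) := hx
    rw [hK] at hmem
    exact Set.notMem_empty x hmem
  have hKc : IsCompact (Dᶜ : Set X) := hD.isClosed_compl.isCompact
  have hstep : ∀ i : ↥(Dᶜ : Set X), ∃ v : X → ℝ, IsThetaHolder θ v ∧
      IsSubaction T A Abar v ∧ v (T i.1) - v i.1 + Abar < A i.1 := by
    intro i
    have hnw : i.1 ∉ nonwanderingSet T A Abar := fun hmem => i.2 (hΩD hmem)
    exact strict_subaction hT hθ0 hθ1 hA Abar hu₀h hu₀ hnw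
  choose w hw1 hw2 hw3 using hstep
  choose C hC0 hwC using fun i => hw1 i
  set U : ↥(Dᶜ : Set X) → Set X := fun i => {x | w i (T x) - w i x + Abar < A x} with hUdef
  have hUopen : ∀ i, IsOpen (U i) := by
    intro i
    exact isOpen_lt (by
      exact (((hw2 i).1.comp hT.cont).sub (hw2 i).1).add continuous_const)
      (holder_cont hθ0 hA)
  have hcover : (Dᶜ : Set X) ⊆ ⋃ i, U i := by
    intro x hx
    exact Set.mem_iUnion.2 ⟨⟨x, hx⟩, hw3 ⟨x, hx⟩⟩
  obtain ⟨t, ht⟩ := hKc.elim_finite_subcover U hUopen hcover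
  have htne : t.Nonempty := by
    obtain ⟨x, hx⟩ := Set.nonempty_iff_ne_empty.2 hK
    have := ht hx
    simp only [Set.mem_iUnion] at this
    obtain ⟨i, hi, -⟩ := this
    exact ⟨i, hi⟩
  set N : ℝ := (t.card : ℝ) with hNdef
  have hN : 0 < N := by
    simp only [hNdef, Nat.cast_pos, Finset.card_pos]
    exact htne
  refine ⟨fun x => (∑ i ∈ t, w i x) / N, ?_, ⟨?_, ?_⟩, ?_⟩
  · -- Holder
    refine ⟨(∑ i ∈ t, C i) / N, div_nonneg (Finset.sum_nonneg fun i _ => hC0 i) hN.le, fun x y => ?_⟩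
    have h1 : |(∑ i ∈ t, w i x) - ∑ i ∈ t, w i y| ≤ (∑ i ∈ t, C i) * dist x y ^ θ := by
      rw [← Finset.sum_sub_distrib]
      calc |∑ i ∈ t, (w i x - w i y)| ≤ ∑ i ∈ t, |w i x - w i y| :=
            Finset.abs_sum_le_sum_abs _ _
        _ ≤ ∑ i ∈ t, C i * dist x y ^ θ := Finset.sum_le_sum (fun i _ => hwC i x y)
        _ = (∑ i ∈ t, C i) * dist x y ^ θ := by rw [Finset.sum_mul]
    rw [div_sub_div_same, abs_div, abs_of_pos hN, div_le_iff₀ hN]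
    calc |(∑ i ∈ t, w i x) - ∑ i ∈ t, w i y| ≤ (∑ i ∈ t, C i) * dist x y ^ θ := h1
      _ = (∑ i ∈ t, C i) / N * dist x y ^ θ * N := by field_simp
  · -- continuity
    exact (continuous_finset_sum t (fun i _ => (hw2 i).1)).div_const N
  · -- subaction inequality
    intro x
    rw [div_sub_div_same, div_add' _ _ _ hN.ne', div_le_iff₀ hN]
    calc (∑ i ∈ t, w i (T x)) - (∑ i ∈ t, w i x) + Abar * N
        = ∑ i ∈ t, (w i (T x) - w i x + Abar) := by
          rw [Finset.sum_add_distrib, Finset.sum_sub_distrib, Finset.sum_const]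
          simp [hNdef]; ring
      _ ≤ ∑ i ∈ t, A x := Finset.sum_le_sum (fun i _ => (hw2 i).2 x)
      _ = A x * N := by rw [Finset.sum_const]; simp [hNdef]; ring
  · -- strict off D
    intro x hx
    have hxK : x ∈ (Dᶜ : Set X) := hx
    have := ht hxK
    simp only [Set.mem_iUnion] at this
    obtain ⟨i₀, hi₀t, hi₀⟩ := this
    rw [div_sub_div_same, div_add' _ _ _ hN.ne', div_lt_iff₀ hN]
    calc (∑ i ∈ t, w i (T x)) - (∑ i ∈ t, w i x) + Abar * N
        = ∑ i ∈ t, (w i (T x) - w i x + Abar) := by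
          rw [Finset.sum_add_distrib, Finset.sum_sub_distrib, Finset.sum_const]
          simp [hNdef]; ring
      _ < ∑ i ∈ t, A x := by
          refine Finset.sum_lt_sum (fun i _ => (hw2 i).2 x) ⟨i₀, hi₀t, ?_⟩
          exact hi₀
      _ = A x * N := by rw [Finset.sum_const]; simp [hNdef]; ring

end SEP



/-- for an open set `D ⊇ Ω(A)`, the set of θ-Hölder sub-actions
whose contact locus lies inside `D` is open and dense among the θ-Hölder
sub-actions for the θ-Hölder topology. -/
theorem subactions_contact_in_open_set_open_dense {X : Type*} [MetricSpace X] [CompactSpace X] [Nonempty X]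
    [MeasurableSpace X] [BorelSpace X]
    (T : X → X) (hT : IsExpandingTransitive T)
    (θ : ℝ) (hθ0 : 0 < θ) (hθ1 : θ ≤ 1)
    (A : X → ℝ) (hA : IsThetaHolder θ A)
    (Abar : ℝ) (hAbar : IsErgMinValue T A Abar)
    (D : Set X) (hD : IsOpen D) (hΩD : nonwanderingSet T A Abar ⊆ D) :
    (∀ u : X → ℝ, IsThetaHolder θ u → IsSubaction T A Abar u →
      contactLocus T A Abar u ⊆ D →
      ∃ ε : ℝ, 0 < ε ∧ ∀ v : X → ℝ, IsThetaHolder θ v → IsSubaction T A Abar v →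
        holderNorm θ (fun x => v x - u x) < ε → contactLocus T A Abar v ⊆ D) ∧
    (∀ u : X → ℝ, IsThetaHolder θ u → IsSubaction T A Abar u →
      ∀ ε : ℝ, 0 < ε → ∃ v : X → ℝ, IsThetaHolder θ v ∧ IsSubaction T A Abar v ∧
        contactLocus T A Abar v ⊆ D ∧ holderNorm θ (fun x => v x - u x) < ε) := by
  constructor
  · -- openness
    intro u huh hus hucont
    by_cases hK : (Dᶜ : Set X) = ∅
    · refine ⟨1, one_pos, fun v _ _ _ => fun x _ => ?_⟩
      by_contra hxD
      have hmem : x ∈ (Dᶜ : Set X) := hxD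
      rw [hK] at hmem
      exact Set.notMem_empty x hmem
    · set g : X → ℝ := fun x => A x - (u (T x) - u x + Abar) with hgdef
      have hgx : ∀ x, g x = A x - (u (T x) - u x + Abar) := fun x => rfl
      have hgcont : Continuous g :=
        (holder_cont hθ0 hA).sub (((hus.1.comp hT.cont).sub hus.1).add continuous_const)
      have hKc : IsCompact (Dᶜ : Set X) := hD.isClosed_compl.isCompact
      have hKne : (Dᶜ : Set X).Nonempty := Set.nonempty_iff_ne_empty.2 hK
      obtain ⟨xs, hxsK, hmin⟩ := hKc.exists_isMinOn hKne hgcont.continuousOn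
      clear_value g
      have hc0 : 0 ≤ g xs := by have := hus.2 xs; rw [hgx]; linarith
      have hcne : g xs ≠ 0 := by
        intro h0
        apply hxsK
        apply hucont
        show A xs = u (T xs) - u xs + Abar
        have := hgx xs
        linarith
      have hc : 0 < g xs := lt_of_le_of_ne hc0 (Ne.symm hcne)
      refine ⟨g xs / 2, half_pos hc, fun v hvh hvs hnorm => fun x hxc => ?_⟩
      by_contra hxD
      have hxK : x ∈ (Dᶜ : Set X) := hxD
      have h1 : g xs ≤ g x := hmin hxK
      have hfh : IsThetaHolder θ (fun y => v y - u y) := holder_sub hvh huh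
      obtain ⟨B, hB0, hBb⟩ := holder_bound (holder_cont hθ0 hfh)
      have h2 : ∀ y, |v y - u y| < g xs / 2 := fun y =>
        lt_of_le_of_lt (abs_le_holderNorm hBb y) hnorm
      have h3 : A x = v (T x) - v x + Abar := hxc
      have h4 := abs_lt.1 (h2 (T x))
      have h5 := abs_lt.1 (h2 x)
      have h6 := hgx x
      linarith [h4.1, h4.2, h5.1, h5.2]
  · -- density
    intro u huh hus ε hε
    obtain ⟨w, hwh, hws, hwstrict⟩ := separating_subaction hT hθ0 hθ1 hA Abar huh hus hD hΩD
    obtain ⟨Cf, hCf0, hCf⟩ := holder_sub hwh huh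
    obtain ⟨B, hB0, hBb⟩ := holder_bound (holder_cont hθ0 ⟨Cf, hCf0, hCf⟩)
    set t : ℝ := min 1 (ε / (2*(B + Cf + 1))) with htdef
    have ht0 : 0 < t := lt_min one_pos (by positivity)
    have ht1 : t ≤ 1 := min_le_left _ _
    have ht2 : t ≤ ε / (2*(B + Cf + 1)) := min_le_right _ _
    clear_value t
    refine ⟨fun x => u x + t * (w x - u x), ?_, ⟨?_, ?_⟩, ?_, ?_⟩
    · obtain ⟨Cu, hCu0, hCu⟩ := huh
      refine ⟨Cu + Cf, by linarith, fun x y => ?_⟩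
      have e : (u x + t*(w x - u x)) - (u y + t*(w y - u y)) =
          (u x - u y) + t*((w x - u x) - (w y - u y)) := by ring
      rw [e]
      have h1 := hCu x y
      have h2 := hCf x y
      have h3 : |t*((w x - u x) - (w y - u y))| = t * |(w x - u x) - (w y - u y)| := by
        rw [abs_mul, abs_of_pos ht0]
      calc |(u x - u y) + t*((w x - u x) - (w y - u y))|
          ≤ |u x - u y| + |t*((w x - u x) - (w y - u y))| := abs_add_le _ _
        _ ≤ Cu * dist x y ^ θ + Cf * dist x y ^ θ := by
            rw [h3]
            have h4 : t * |(w x - u x) - (w y - u y)| ≤ 1 * |(w x - u x) - (w y - u y)| := by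
              nlinarith [abs_nonneg ((w x - u x) - (w y - u y))]
            rw [one_mul] at h4
            linarith
        _ = (Cu + Cf) * dist x y ^ θ := by ring
    · exact hus.1.add (continuous_const.mul ((holder_cont hθ0 hwh).sub hus.1))
    · intro x
      have h1 := hus.2 x
      have h2 := hws.2 x
      show u (T x) + t*(w (T x) - u (T x)) - (u x + t*(w x - u x)) + Abar ≤ A x
      nlinarith [mul_le_mul_of_nonneg_left h1 (show (0:ℝ) ≤ 1 - t by linarith),
        mul_le_mul_of_nonneg_left h2 ht0.le]
    · intro x hx
      by_contra hxD
      have h2 := hwstrict x hxD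
      have h1 := hus.2 x
      have h3 : A x = (u (T x) + t*(w (T x) - u (T x))) - (u x + t*(w x - u x)) + Abar := hx
      nlinarith [mul_lt_mul_of_pos_left h2 ht0,
        mul_le_mul_of_nonneg_left h1 (show (0:ℝ) ≤ 1 - t by linarith)]
    · have hb1 : ∀ x, |(u x + t*(w x - u x)) - u x| ≤ t * B := by
        intro x
        rw [show (u x + t*(w x - u x)) - u x = t*(w x - u x) by ring, abs_mul, abs_of_pos ht0]
        nlinarith [hBb x, abs_nonneg (w x - u x)]
      have hb2 : ∀ x y : X, |((u x + t*(w x - u x)) - u x) - ((u y + t*(w y - u y)) - u y)|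
          ≤ (t * Cf) * dist x y ^ θ := by
        intro x y
        rw [show ((u x + t*(w x - u x)) - u x) - ((u y + t*(w y - u y)) - u y)
          = t * ((w x - u x) - (w y - u y)) by ring, abs_mul, abs_of_pos ht0, mul_assoc]
        exact mul_le_mul_of_nonneg_left (hCf x y) ht0.le
      have hnorm := holderNorm_le (θ := θ) (by positivity : (0:ℝ) ≤ t * B)
        (by positivity : (0:ℝ) ≤ t * Cf) hb1 hb2
      have hfinal : t * B + t * Cf < ε := by
        have h7 : t * (B + Cf) ≤ (ε / (2*(B + Cf + 1))) * (B + Cf) := by nlinarith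
        have h8 : (ε / (2*(B + Cf + 1))) * (B + Cf) < ε := by
          rw [div_mul_eq_mul_div, div_lt_iff₀ (by linarith)]
          nlinarith
        nlinarith
      linarith
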